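/- Let N and v be integers with 2 ≤ v ≤ N+1, let f = ⌊(N+1)/v⌋ and d = (f+1)v − N, and let s = Σ_{i=f−d+2}^{f−1} (d−f−1+i)·C(N,i) and s' = Σ_{i=f−v+1}^{f−2} (v−f+i)·C(N,i), with C(N,i) = 0 for i < 0. If N ≢ v−1 (mod v), then Σ_{i=0}^{f−1} C(N,i) + ⌊(C(N,f) − s)/d⌋ = Λ(N,v). If N ≡ v−1 (mod v), then Σ_{i=0}^{f−2} C(N,i) + C(N,f−1) − ⌈s'/(v+1)⌉ = Λ(N,v). (In particular the constructed type 𝓛(N,v) has exactly Λ(N,v) shapes.) -/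

import Mathlib

/-- `C(N,i)` for an integer index `i`, with the convention `C(N,i) = 0` for `i < 0`. -/
def chooseZ (N : ℕ) (i : ℤ) : ℤ := if 0 ≤ i then (N.choose i.toNat : ℤ) else 0

/-- The constructed type `𝓛(N,v)` has exactly `Λ(N,v)` shapes: with `f = ⌊(N+1)/v⌋`,
`d = (f+1)v − N`, `s = Σ_{i=f−d+2}^{f−1} (d−f−1+i)·C(N,i)` and
`s' = Σ_{i=f−v+1}^{f−2} (v−f+i)·C(N,i)` (where `C(N,i) = 0` for `i < 0`):
if `N ≢ v−1 (mod v)` then `Σ_{i=0}^{f−1} C(N,i) + ⌊(C(N,f) − s)/d⌋ = Λ(N,v)`, and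
if `N ≡ v−1 (mod v)` then `Σ_{i=0}^{f−2} C(N,i) + C(N,f−1) − ⌈s'/(v+1)⌉ = Λ(N,v)`.
(Division `/` on `ℤ` by the positive numbers `d` and `v+1` is floor division, and
`(s' + v)/(v+1) = ⌈s'/(v+1)⌉`.) -/
lemma sum_split (g : ℤ → ℤ) {a b c : ℤ} (h1 : a - 1 ≤ b) (h2 : b ≤ c) :
    ∑ i ∈ Finset.Icc a c, g i = (∑ i ∈ Finset.Icc a b, g i) + ∑ i ∈ Finset.Icc (b+1) c, g i := by
  rw [← Finset.sum_union]
  · congr 1; ext x; simp; omega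
  · rw [Finset.disjoint_left]; intro x hx hy; simp at hx hy; omega

lemma sum_norm (g : ℤ → ℤ) (hg : ∀ i < 0, g i = 0) {a b : ℤ} (hab : a ≤ b + 1) :
    ∑ i ∈ Finset.Icc a b, g i
      = (∑ i ∈ Finset.Icc 0 b, g i) - ∑ i ∈ Finset.Icc 0 (a - 1), g i := by
  rcases le_or_gt 0 a with h | h
  · rcases le_or_gt 0 b with hb | hb
    · have key := sum_split g (show (0:ℤ) - 1 ≤ a - 1 by omega) (show a - 1 ≤ b by omega)
      rw [show a - 1 + 1 = a by ring] at key
      rw [key]; ring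
    · have h1 : Finset.Icc a b = ∅ := by rw [Finset.Icc_eq_empty_iff]; omega
      have h2 : Finset.Icc (0:ℤ) b = ∅ := by rw [Finset.Icc_eq_empty_iff]; omega
      have h3 : Finset.Icc (0:ℤ) (a-1) = ∅ := by rw [Finset.Icc_eq_empty_iff]; omega
      simp [h1, h2, h3]
  · have h3 : Finset.Icc (0:ℤ) (a-1) = ∅ := by rw [Finset.Icc_eq_empty_iff]; omega
    rcases le_or_gt 0 b with hb | hb
    · have key := sum_split g (show a - 1 ≤ -1 by omega) (show (-1:ℤ) ≤ b by omega)
      rw [show (-1:ℤ) + 1 = 0 by ring] at key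
      rw [key]
      have : ∑ i ∈ Finset.Icc a (-1), g i = 0 := by
        apply Finset.sum_eq_zero; intro i hi; simp at hi; exact hg i (by omega)
      simp [h3, this]
    · have h1 : Finset.Icc (0:ℤ) b = ∅ := by rw [Finset.Icc_eq_empty_iff]; omega
      have : ∑ i ∈ Finset.Icc a b, g i = 0 := by
        apply Finset.sum_eq_zero; intro i hi; simp at hi; exact hg i (by omega)
      simp [h1, h3, this]

lemma neg_ediv_lemma (a m : ℤ) (hm : 0 < m) : (-a) / m = -((a + m - 1) / m) := by
  have h0 : a = m * (a / m) + a % m := (Int.mul_ediv_add_emod a m).symm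
  have h1 : 0 ≤ a % m := Int.emod_nonneg a (by omega)
  have h2 : a % m < m := Int.emod_lt_of_pos a hm
  set q := a / m; set r := a % m
  rcases eq_or_lt_of_le h1 with hr | hr
  · have ha : -a = m * (-q) := by rw [h0, ← hr]; ring
    have hb : a + m - 1 = (m - 1) + m * q := by rw [h0, ← hr]; ring
    rw [ha, Int.mul_ediv_cancel_left _ (show m ≠ 0 by omega), hb,
      Int.add_mul_ediv_left _ _ (show m ≠ 0 by omega)]
    rw [Int.ediv_eq_zero_of_lt (by omega) (by omega)]
    ring
  · have ha : -a = (m - r) + m * (-q - 1) := by rw [h0]; ring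
    have hb : a + m - 1 = (r - 1) + m * (q + 1) := by rw [h0]; ring
    rw [ha, hb]
    rw [Int.add_mul_ediv_left _ _ (show m ≠ 0 by omega),
        Int.add_mul_ediv_left _ _ (show m ≠ 0 by omega)]
    rw [Int.ediv_eq_zero_of_lt (by omega) (by omega),
        Int.ediv_eq_zero_of_lt (by omega) (by omega)]
    ring

lemma chooseZ_neg (N : ℕ) : ∀ i < (0:ℤ), chooseZ N i = 0 := by
  intro i hi; simp [chooseZ, not_le.mpr hi]

theorem stmt9 (N v : ℕ) (hv : 2 ≤ v) (hvN : v ≤ N + 1) :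
    ∀ f d s s' Λ : ℤ,
      f = ((N : ℤ) + 1) / (v : ℤ) →
      d = (f + 1) * (v : ℤ) - (N : ℤ) →
      s = ∑ i ∈ Finset.Icc (f - d + 2) (f - 1), (d - f - 1 + i) * chooseZ N i →
      s' = ∑ i ∈ Finset.Icc (f - (v : ℤ) + 1) (f - 2), ((v : ℤ) - f + i) * chooseZ N i →
      Λ = (∑ i ∈ Finset.Icc (f - d + 2) f, (f + 1 - i) * chooseZ N i) / d
            + ∑ i ∈ Finset.Icc 0 (f - d + 1), chooseZ N i →
      (((N : ℤ) % (v : ℤ) ≠ (v : ℤ) - 1 →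
          (∑ i ∈ Finset.Icc 0 (f - 1), chooseZ N i) + (chooseZ N f - s) / d = Λ) ∧
        ((N : ℤ) % (v : ℤ) = (v : ℤ) - 1 →
          (∑ i ∈ Finset.Icc 0 (f - 2), chooseZ N i) + chooseZ N (f - 1)
            - (s' + (v : ℤ)) / ((v : ℤ) + 1) = Λ)) := by
  intro f d s s' Λ hf hd hs hs' hΛ
  have hv2 : (2:ℤ) ≤ (v:ℤ) := by exact_mod_cast hv
  have hvN' : (v:ℤ) ≤ (N:ℤ) + 1 := by exact_mod_cast hvN
  have hvpos : (0:ℤ) < (v:ℤ) := by omega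
  set r : ℤ := ((N:ℤ) + 1) % (v:ℤ) with hr
  have hr0 : 0 ≤ r := Int.emod_nonneg _ (by omega)
  have hrv : r < (v:ℤ) := Int.emod_lt_of_pos _ hvpos
  have hfr : (v:ℤ) * f + r = (N:ℤ) + 1 := by rw [hf, hr]; exact Int.mul_ediv_add_emod _ _
  have hdr : d = (v:ℤ) + 1 - r := by rw [hd]; linarith [hfr]
  have hf1 : 1 ≤ f := by
    rw [hf, Int.le_ediv_iff_mul_le hvpos]; omega
  have hN0 : 0 ≤ (N:ℤ) % (v:ℤ) := Int.emod_nonneg _ (by omega)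
  have hNv : (N:ℤ) % (v:ℤ) < (v:ℤ) := Int.emod_lt_of_pos _ hvpos
  have h1mod : r = ((N:ℤ) % (v:ℤ) + 1) % (v:ℤ) := by
    rw [hr]
    conv_lhs => rw [Int.add_emod]
    rw [Int.emod_eq_of_lt (by omega) (by omega : (1:ℤ) < (v:ℤ))]
  have hrel : ((N:ℤ) % (v:ℤ) = (v:ℤ) - 1) ↔ r = 0 := by
    constructor
    · intro h
      rw [h1mod, h, show (v:ℤ) - 1 + 1 = (v:ℤ) by ring, Int.emod_self]
    · intro h
      by_contra hne
      rw [h1mod, Int.emod_eq_of_lt (by omega) (by omega)] at h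
      omega
  constructor
  · -- case N % v ≠ v - 1
    intro hne
    have hrpos : 1 ≤ r := by
      rcases eq_or_lt_of_le hr0 with h | h
      · exact absurd (hrel.mpr h.symm) hne
      · omega
    have hd2 : 2 ≤ d := by omega
    have hd0 : d ≠ 0 := by omega
    have e1 : (∑ i ∈ Finset.Icc (f - d + 2) f, (f + 1 - i) * chooseZ N i)
        = (∑ i ∈ Finset.Icc (f - d + 2) (f - 1), (f + 1 - i) * chooseZ N i)
          + (f + 1 - f) * chooseZ N f := by
      have h := sum_split (fun i => (f + 1 - i) * chooseZ N i)
        (show f - d + 2 - 1 ≤ f - 1 by omega) (show f - 1 ≤ f by omega)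
      rw [show f - 1 + 1 = f by ring, Finset.Icc_self, Finset.sum_singleton] at h
      exact h
    have e2 : (∑ i ∈ Finset.Icc (f - d + 2) (f - 1), (f + 1 - i) * chooseZ N i)
        = d * (∑ i ∈ Finset.Icc (f - d + 2) (f - 1), chooseZ N i) - s := by
      rw [hs, Finset.mul_sum, ← Finset.sum_sub_distrib]
      apply Finset.sum_congr rfl; intros; ring
    have e3 : (∑ i ∈ Finset.Icc (f - d + 2) (f - 1), chooseZ N i)
        = (∑ i ∈ Finset.Icc 0 (f - 1), chooseZ N i)
          - ∑ i ∈ Finset.Icc 0 (f - d + 1), chooseZ N i := by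
      have h := sum_norm (chooseZ N) (chooseZ_neg N)
        (show f - d + 2 ≤ (f - 1) + 1 by omega)
      rw [show f - d + 2 - 1 = f - d + 1 by ring] at h
      exact h
    rw [hΛ, e1, e2, e3]
    rw [show d * ((∑ i ∈ Finset.Icc 0 (f - 1), chooseZ N i)
          - ∑ i ∈ Finset.Icc 0 (f - d + 1), chooseZ N i) - s + (f + 1 - f) * chooseZ N f
        = (chooseZ N f - s)
          + d * ((∑ i ∈ Finset.Icc 0 (f - 1), chooseZ N i)
              - ∑ i ∈ Finset.Icc 0 (f - d + 1), chooseZ N i) by ring]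
    rw [Int.add_mul_ediv_left _ _ hd0]
    ring
  · -- case N % v = v - 1
    intro heq
    have hr00 : r = 0 := hrel.mp heq
    have hd2 : d = (v:ℤ) + 1 := by omega
    rw [show f - d + 2 = f - (v:ℤ) + 1 by omega, show f - d + 1 = f - (v:ℤ) by omega] at hΛ
    -- binomial identity: C(N,f) = (v-1) * C(N,f-1)
    set F : ℕ := f.toNat with hFdef
    have hF : (F:ℤ) = f := Int.toNat_of_nonneg (by omega)
    have hF1 : 1 ≤ F := by omega
    have hNF : v * F = N + 1 := by
      have : (v:ℤ) * (F:ℤ) = (N:ℤ) + 1 := by rw [hF]; omega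
      exact_mod_cast this
    have hFN : F ≤ N := by nlinarith [hNF]
    have hchoose : N.choose F + N.choose (F - 1) = N.choose (F - 1) * v := by
      have h := Nat.choose_succ_right_eq N (F - 1)
      rw [show F - 1 + 1 = F by omega] at h
      have hNsub : N - (F - 1) = (v - 1) * F := by
        have h1 : (v - 1) * F = v * F - 1 * F := Nat.sub_mul _ _ _
        rw [hNF] at h1
        omega
      rw [hNsub] at h
      -- h : N.choose F * F = N.choose (F-1) * ((v-1) * F)
      have h2 : N.choose F = N.choose (F - 1) * (v - 1) := by
        apply Nat.eq_of_mul_eq_mul_right (show 0 < F by omega)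
        rw [h]; ring
      obtain ⟨w, hw⟩ : ∃ w, v = w + 1 := ⟨v - 1, by omega⟩
      subst hw
      rw [h2]
      simp [Nat.mul_succ]
    have hCf : chooseZ N f = (N.choose F : ℤ) := by
      simp only [chooseZ, if_pos (show (0:ℤ) ≤ f by omega)]
      rfl
    have hCf1 : chooseZ N (f - 1) = (N.choose (F - 1) : ℤ) := by
      simp only [chooseZ, if_pos (show (0:ℤ) ≤ f - 1 by omega)]
      congr 2
      omega
    have hcf : chooseZ N f = ((v:ℤ) - 1) * chooseZ N (f - 1) := by
      rw [hCf, hCf1]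
      have : (N.choose F : ℤ) + (N.choose (F-1) : ℤ) = (N.choose (F-1) : ℤ) * (v:ℤ) := by
        exact_mod_cast hchoose
      linarith
    -- split sums
    have e1 : (∑ i ∈ Finset.Icc (f - (v:ℤ) + 1) f, (f + 1 - i) * chooseZ N i)
        = (∑ i ∈ Finset.Icc (f - (v:ℤ) + 1) (f - 1), (f + 1 - i) * chooseZ N i)
          + (f + 1 - f) * chooseZ N f := by
      have h := sum_split (fun i => (f + 1 - i) * chooseZ N i)
        (show f - (v:ℤ) + 1 - 1 ≤ f - 1 by omega) (show f - 1 ≤ f by omega)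
      rw [show f - 1 + 1 = f by ring, Finset.Icc_self, Finset.sum_singleton] at h
      exact h
    have e1' : (∑ i ∈ Finset.Icc (f - (v:ℤ) + 1) (f - 1), (f + 1 - i) * chooseZ N i)
        = (∑ i ∈ Finset.Icc (f - (v:ℤ) + 1) (f - 2), (f + 1 - i) * chooseZ N i)
          + (f + 1 - (f - 1)) * chooseZ N (f - 1) := by
      have h := sum_split (fun i => (f + 1 - i) * chooseZ N i)
        (show f - (v:ℤ) + 1 - 1 ≤ f - 2 by omega) (show f - 2 ≤ f - 1 by omega)
      rw [show f - 2 + 1 = f - 1 by ring, Finset.Icc_self, Finset.sum_singleton] at h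
      exact h
    have e2 : (∑ i ∈ Finset.Icc (f - (v:ℤ) + 1) (f - 2), (f + 1 - i) * chooseZ N i)
        = ((v:ℤ) + 1) * (∑ i ∈ Finset.Icc (f - (v:ℤ) + 1) (f - 2), chooseZ N i) - s' := by
      rw [hs', Finset.mul_sum, ← Finset.sum_sub_distrib]
      apply Finset.sum_congr rfl; intros; ring
    have e3 : (∑ i ∈ Finset.Icc (f - (v:ℤ) + 1) (f - 2), chooseZ N i)
        = (∑ i ∈ Finset.Icc 0 (f - 2), chooseZ N i)
          - ∑ i ∈ Finset.Icc 0 (f - (v:ℤ)), chooseZ N i := by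
      have h := sum_norm (chooseZ N) (chooseZ_neg N)
        (show f - (v:ℤ) + 1 ≤ (f - 2) + 1 by omega)
      rw [show f - (v:ℤ) + 1 - 1 = f - (v:ℤ) by ring] at h
      exact h
    rw [hΛ, hd2, e1, e1', e2, e3, hcf]
    rw [show ((v:ℤ) + 1) * ((∑ i ∈ Finset.Icc 0 (f - 2), chooseZ N i)
            - ∑ i ∈ Finset.Icc 0 (f - (v:ℤ)), chooseZ N i) - s'
          + (f + 1 - (f - 1)) * chooseZ N (f - 1)
          + (f + 1 - f) * (((v:ℤ) - 1) * chooseZ N (f - 1))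
        = (-s') + ((v:ℤ) + 1) * ((∑ i ∈ Finset.Icc 0 (f - 2), chooseZ N i)
            - (∑ i ∈ Finset.Icc 0 (f - (v:ℤ)), chooseZ N i) + chooseZ N (f - 1)) by ring]
    rw [Int.add_mul_ediv_left _ _ (show (v:ℤ) + 1 ≠ 0 by omega)]
    rw [neg_ediv_lemma s' ((v:ℤ) + 1) (by omega)]
    rw [show s' + ((v:ℤ) + 1) - 1 = s' + (v:ℤ) by ring]
    ring
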